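/- arXiv:2002.02263 — 2 statements merged into one kernel-verified Lean document; each statement's English description precedes it below -/
import Mathlib

section
/- Let F, G : ℝ → ℝ be convex functions with the same global minimum value β, attained by G at a point a and by F at a point b with a ≤ b. Assume moreover that G(x) ≤ F(x) for all x ≤ a and F(x) ≤ G(x) for all x ≥ b. Then the lower convex envelope of min(F, G) equals G(x) for x ≤ a, equals β for a ≤ x ≤ b, and equals F(x) for x ≥ b. -/
noncomputable def lowerConvexEnv (h : ℝ → ℝ) (p : ℝ) : ℝ :=
  sSup {y : ℝ | ∃ g : ℝ → ℝ, ConvexOn ℝ Set.univ g ∧ (∀ x, g x ≤ h x) ∧ y = g p}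

theorem convex_env_of_min_two_convex
    (F G : ℝ → ℝ) (β a b : ℝ)
    (hF : ConvexOn ℝ Set.univ F) (hG : ConvexOn ℝ Set.univ G)
    (hFmin : ∀ x, β ≤ F x) (hGmin : ∀ x, β ≤ G x)
    (hGa : G a = β) (hFb : F b = β) (hab : a ≤ b)
    (hGF : ∀ x ≤ a, G x ≤ F x) (hFG : ∀ x, b ≤ x → F x ≤ G x) :
    (∀ x ≤ a, lowerConvexEnv (fun p => min (F p) (G p)) x = G x) ∧
    (∀ x, a ≤ x → x ≤ b → lowerConvexEnv (fun p => min (F p) (G p)) x = β) ∧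
    (∀ x, b ≤ x → lowerConvexEnv (fun p => min (F p) (G p)) x = F x) := by
  -- G is antitone on (-∞, a]
  have antG : ∀ u v : ℝ, u ≤ v → v ≤ a → G v ≤ G u := by
    intro u v huv hva
    have hseg : v ∈ segment ℝ u a := by
      rw [segment_eq_Icc (huv.trans hva)]; exact ⟨huv, hva⟩
    have := hG.le_on_segment (Set.mem_univ u) (Set.mem_univ a) hseg
    rw [hGa] at this
    exact this.trans (max_le le_rfl (hGmin u))
  -- F is monotone on [b, ∞)
  have monF : ∀ u v : ℝ, b ≤ u → u ≤ v → F u ≤ F v := by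
    intro u v hbu huv
    have hseg : u ∈ segment ℝ b v := by
      rw [segment_eq_Icc (hbu.trans huv)]; exact ⟨hbu, huv⟩
    have := hF.le_on_segment (Set.mem_univ b) (Set.mem_univ v) hseg
    rw [hFb] at this
    exact this.trans (max_le (hFmin v) le_rfl)
  -- witness for the left part
  set Ga : ℝ → ℝ := fun x => G (min x a) with hGadef
  have hGaconv : ConvexOn ℝ Set.univ Ga := by
    refine ⟨convex_univ, fun x _ y _ μ ν hμ hν hμν => ?_⟩
    simp only [smul_eq_mul, hGadef]
    have h1 : μ * min x a + ν * min y a ≤ min (μ * x + ν * y) a := by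
      refine le_min ?_ ?_
      · gcongr <;> [exact min_le_left _ _; exact min_le_left _ _]
      · calc μ * min x a + ν * min y a ≤ μ * a + ν * a := by
              gcongr <;> [exact min_le_right _ _; exact min_le_right _ _]
          _ = a := by rw [← add_mul, hμν, one_mul]
    have h2 : G (min (μ * x + ν * y) a) ≤ G (μ * min x a + ν * min y a) :=
      antG _ _ h1 (min_le_right _ _)
    refine h2.trans ?_
    have := hG.2 (Set.mem_univ (min x a)) (Set.mem_univ (min y a)) hμ hν hμν
    simpa using this
  have hGale : ∀ x, Ga x ≤ min (F x) (G x) := by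
    intro x
    rcases le_total x a with hx | hx
    · rw [hGadef]; simp only [min_eq_left hx]
      exact le_min (hGF x hx) le_rfl
    · rw [hGadef]; simp only [min_eq_right hx, hGa]
      exact le_min (hFmin x) (hGmin x)
  -- witness for the right part
  set Fb : ℝ → ℝ := fun x => F (max x b) with hFbdef
  have hFbconv : ConvexOn ℝ Set.univ Fb := by
    refine ⟨convex_univ, fun x _ y _ μ ν hμ hν hμν => ?_⟩
    simp only [smul_eq_mul, hFbdef]
    have h1 : max (μ * x + ν * y) b ≤ μ * max x b + ν * max y b := by
      refine max_le ?_ ?_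
      · gcongr <;> [exact le_max_left _ _; exact le_max_left _ _]
      · calc b = μ * b + ν * b := by rw [← add_mul, hμν, one_mul]
          _ ≤ μ * max x b + ν * max y b := by
              gcongr <;> [exact le_max_right _ _; exact le_max_right _ _]
    have h2 : F (max (μ * x + ν * y) b) ≤ F (μ * max x b + ν * max y b) :=
      monF _ _ (le_max_right _ _) h1
    refine h2.trans ?_
    have := hF.2 (Set.mem_univ (max x b)) (Set.mem_univ (max y b)) hμ hν hμν
    simpa using this
  have hFble : ∀ x, Fb x ≤ min (F x) (G x) := by
    intro x
    rcases le_total b x with hx | hx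
    · rw [hFbdef]; simp only [max_eq_left hx]
      exact le_min le_rfl (hFG x hx)
    · rw [hFbdef]; simp only [max_eq_right hx, hFb]
      exact le_min (hFmin x) (hGmin x)
  -- upper bound for any admissible g on [a,b]
  have hmid : ∀ (g : ℝ → ℝ), ConvexOn ℝ Set.univ g →
      (∀ x, g x ≤ min (F x) (G x)) → ∀ p, a ≤ p → p ≤ b → g p ≤ β := by
    intro g hgc hgle p hap hpb
    have hseg : p ∈ segment ℝ a b := by
      rw [segment_eq_Icc hab]; exact ⟨hap, hpb⟩
    have h := hgc.le_on_segment (Set.mem_univ a) (Set.mem_univ b) hseg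
    have hga : g a ≤ β := (hgle a).trans (by rw [← hGa]; exact min_le_right _ _)
    have hgb : g b ≤ β := (hgle b).trans (by rw [← hFb]; exact min_le_left _ _)
    exact h.trans (max_le hga hgb)
  -- master pointwise lemma
  have key : ∀ (p v : ℝ) (g : ℝ → ℝ), ConvexOn ℝ Set.univ g →
      (∀ x, g x ≤ min (F x) (G x)) → g p = v →
      (∀ (g' : ℝ → ℝ), ConvexOn ℝ Set.univ g' → (∀ x, g' x ≤ min (F x) (G x)) →
        g' p ≤ v) →
      lowerConvexEnv (fun q => min (F q) (G q)) p = v := by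
    intro p v g hgc hgle hgp hub
    unfold lowerConvexEnv
    apply le_antisymm
    · refine csSup_le ⟨g p, g, hgc, hgle, rfl⟩ ?_
      rintro y ⟨g', hg'c, hg'le, rfl⟩
      exact hub g' hg'c hg'le
    · apply le_csSup
      · exact ⟨v, by rintro y ⟨g', hg'c, hg'le, rfl⟩; exact hub g' hg'c hg'le⟩
      · exact ⟨g, hgc, hgle, hgp.symm⟩
  refine ⟨?_, ?_, ?_⟩
  · intro x hx
    refine key x (G x) Ga hGaconv hGale (by rw [hGadef]; simp [min_eq_left hx])
      (fun g' _ hg'le => (hg'le x).trans (min_le_right _ _))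
  · intro x hax hxb
    exact key x β (fun _ => β) (convexOn_const β convex_univ)
      (fun y => le_min (hFmin y) (hGmin y)) rfl
      (fun g' hg'c hg'le => hmid g' hg'c hg'le x hax hxb)
  · intro x hx
    refine key x (F x) Fb hFbconv hFble (by rw [hFbdef]; simp [max_eq_left hx])
      (fun g' _ hg'le => (hg'le x).trans (min_le_left _ _))
end

section
/- Let a, V : ℝ → [0,1] be continuous, G : ℝ → [0,∞), θ ∈ ℝ, β ≥ 0, h ∈ (0,1), ε > 0, δ ∈ (0,1), ℓ₁ < x₀ < ℓ₂, and y > 0. Define χ(x) = ∫_{x₀}^{x} 1/(a(r) ∨ δ) dr and v(t,x) = θx - ε∫_{x₀}^{x} χ(s) ds + (βh - ε)t. Assume: (i) V(x) ≥ h for all x ∈ [ℓ₁, ℓ₂]; (ii) G(θ - ε p) ≥ βh whenever |p| ≥ y; (iii) |χ(x)| ≥ y for all x ∉ [ℓ₁, ℓ₂]. Then v is a classical subsolution: for all t > 0 and x ∈ ℝ, ∂_t v ≤ a(x)·∂²_{xx} v + G(∂_x v) + β V(x). -/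
theorem subsolution_with_hill
    (a V : ℝ → ℝ) (G : ℝ → ℝ) (θ β h ε δ ℓ₁ x₀ ℓ₂ y : ℝ)
    (ha : Continuous a) (hVc : Continuous V)
    (ha01 : ∀ x, a x ∈ Set.Icc (0:ℝ) 1) (hV01 : ∀ x, V x ∈ Set.Icc (0:ℝ) 1)
    (hGnonneg : ∀ p, 0 ≤ G p)
    (hβ : 0 ≤ β) (hh : h ∈ Set.Ioo (0:ℝ) 1) (hε : 0 < ε) (hδ : δ ∈ Set.Ioo (0:ℝ) 1)
    (hord : ℓ₁ < x₀ ∧ x₀ < ℓ₂) (hy : 0 < y)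
    (χ : ℝ → ℝ) (hχ : χ = fun x => ∫ r in x₀..x, (max (a r) δ)⁻¹)
    (v : ℝ → ℝ → ℝ)
    (hv : v = fun t x => θ * x - ε * (∫ s in x₀..x, χ s) + (β * h - ε) * t)
    (hhill : ∀ x ∈ Set.Icc ℓ₁ ℓ₂, h ≤ V x)
    (hcoer : ∀ p : ℝ, y ≤ |p| → β * h ≤ G (θ - ε * p))
    (hχout : ∀ x, x ∉ Set.Icc ℓ₁ ℓ₂ → y ≤ |χ x|) :
    ∀ t > (0:ℝ), ∀ x : ℝ,
      deriv (fun t' => v t' x) t ≤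
        a x * deriv (deriv (fun x' => v t x')) x +
          G (deriv (fun x' => v t x') x) + β * V x := by
  intro t ht x
  have hmpos : ∀ z : ℝ, 0 < max (a z) δ := fun z =>
    lt_of_lt_of_le hδ.1 (le_max_right _ _)
  have hf : Continuous fun r => (max (a r) δ)⁻¹ :=
    (ha.max continuous_const).inv₀ fun z => (hmpos z).ne'
  -- χ is differentiable with derivative (max (a z) δ)⁻¹
  have hχd : ∀ z : ℝ, HasDerivAt χ ((max (a z) δ)⁻¹) z := by
    intro z; rw [hχ]; exact (hf.integral_hasStrictDerivAt x₀ z).hasDerivAt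
  have hχc : Continuous χ := by
    rw [continuous_iff_continuousAt]
    exact fun z => ((hχd z).differentiableAt).continuousAt
  have hId : ∀ z : ℝ, HasDerivAt (fun x' => ∫ s in x₀..x', χ s) (χ z) z := fun z =>
    (hχc.integral_hasStrictDerivAt x₀ z).hasDerivAt
  -- time derivative
  have hdt : deriv (fun t' => v t' x) t = β * h - ε := by
    rw [hv]
    simpa using (((hasDerivAt_id t).const_mul (β * h - ε)).const_add
      (θ * x - ε * (∫ s in x₀..x, χ s))).deriv
  -- space derivative
  have hDx : ∀ z : ℝ, HasDerivAt (fun x' => v t x') (θ - ε * χ z) z := by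
    intro z
    rw [hv]
    have h1 : HasDerivAt (fun x' : ℝ => θ * x') θ z := by
      simpa using (hasDerivAt_id z).const_mul θ
    exact ((h1.sub ((hId z).const_mul ε)).add_const ((β * h - ε) * t))
  have hderiv1 : deriv (fun x' => v t x') = fun z => θ - ε * χ z :=
    funext fun z => (hDx z).deriv
  have hdxx : deriv (deriv (fun x' => v t x')) x = -(ε * (max (a x) δ)⁻¹) := by
    rw [hderiv1]
    exact (((hχd x).const_mul ε).const_sub θ).deriv
  rw [hdt, hdxx, hderiv1]
  have hm := hmpos x
  have haxm : a x * (max (a x) δ)⁻¹ ≤ 1 := by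
    rw [← div_eq_mul_inv, div_le_one hm]
    exact le_max_left _ _
  have haxm0 : 0 ≤ a x * (max (a x) δ)⁻¹ :=
    mul_nonneg (ha01 x).1 (le_of_lt (inv_pos.mpr hm))
  have key : -ε ≤ a x * -(ε * (max (a x) δ)⁻¹) := by nlinarith
  by_cases hx : x ∈ Set.Icc ℓ₁ ℓ₂
  · have hV := hhill x hx
    have hG := hGnonneg (θ - ε * χ x)
    nlinarith
  · have hG := hcoer (χ x) (hχout x hx)
    have hV := (hV01 x).1
    nlinarith
end
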